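/- Let L > 1. Then ∫_{−π/2}^{π/2} (u_{ε,L}'(x))² dx tends to +∞ as ε tends to 0 from the right, where u_{ε,L}' denotes the derivative of u_{ε,L} (taken to be 0 at the finitely many points where u_{ε,L} is not differentiable). -/

import Mathlib

set_option maxHeartbeats 4000000

open Real Set Filter

/-- For `L > 1`, the squared `H¹₀`-norm of `u_{ε,L}(x) = min(cos(x/L), (1/ε)·cos x)`
tends to `+∞` as `ε → 0⁺`. -/
theorem stmt_9 (L : ℝ) (hL : 1 < L) :
    Filter.Tendsto
      (fun ε : ℝ => ∫ x in (-(π / 2))..(π / 2),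
        (deriv (fun y => min (Real.cos (y / L)) ((1 / ε) * Real.cos y)) x) ^ 2)
      (nhdsWithin 0 (Set.Ioi 0)) Filter.atTop := by
  have hL0 : (0:ℝ) < L := by linarith
  have hπ : (0:ℝ) < π := Real.pi_pos
  set c : ℝ := Real.cos (π / (2 * L)) with hc_def
  have hcpos : 0 < c := by
    apply Real.cos_pos_of_mem_Ioo
    constructor
    · have : 0 < π / (2 * L) := by positivity
      linarith
    · rw [div_lt_div_iff₀ (by positivity) (by norm_num)]
      nlinarith
  have hc1 : c ≤ 1 := Real.cos_le_one _
  set ε₀ : ℝ := min 1 (1 / (2 * c)) with hε₀def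
  have hε₀pos : 0 < ε₀ := lt_min one_pos (by positivity)
  -- main lower bound
  have key : ∀ ε ∈ Ioo (0:ℝ) ε₀,
      c / (2 * ε) ≤ ∫ x in (-(π / 2))..(π / 2),
        (deriv (fun y => min (Real.cos (y / L)) ((1 / ε) * Real.cos y)) x) ^ 2 := by
    intro ε hε
    obtain ⟨hε0, hεlt⟩ := hε
    have hε1 : ε ≤ 1 := le_of_lt (lt_of_lt_of_le hεlt (min_le_left _ _))
    have hεc2 : ε * c < 1 / 2 := by
      have h2 : ε < 1 / (2 * c) := lt_of_lt_of_le hεlt (min_le_right _ _)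
      rw [lt_div_iff₀ (by positivity)] at h2
      linarith
    have hεc0 : 0 < ε * c := by positivity
    have hεc1 : ε * c < 1 := by linarith
    set f : ℝ → ℝ := fun y => min (Real.cos (y / L)) ((1 / ε) * Real.cos y) with hfdef
    set a : ℝ := Real.arccos (ε * c) with hadef
    have hcos_a : Real.cos a = ε * c := Real.cos_arccos (by linarith) (le_of_lt hεc1)
    have ha0 : 0 < a := Real.arccos_pos.2 hεc1
    have haπ2 : a < π / 2 := Real.arccos_lt_pi_div_two.2 hεc0
    -- derivative formula on (a, π/2]
    have h_deriv : ∀ x ∈ Ioc a (π / 2), deriv f x = (1 / ε) * (-Real.sin x) := by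
      intro x hx
      have hx0 : 0 < x := lt_trans ha0 hx.1
      have hS : IsOpen {y : ℝ | (1 / ε) * Real.cos y < Real.cos (y / L)} := by
        apply isOpen_lt
        · exact continuous_const.mul Real.continuous_cos
        · exact Real.continuous_cos.comp (continuous_id.div_const L)
      have hxS : x ∈ {y : ℝ | (1 / ε) * Real.cos y < Real.cos (y / L)} := by
        have h1 : Real.cos x < ε * c := by
          rw [← hcos_a]
          exact Real.cos_lt_cos_of_nonneg_of_le_pi (le_of_lt ha0)
            (le_trans hx.2 (by linarith)) hx.1
        have h2 : c ≤ Real.cos (x / L) := by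
          apply Real.cos_le_cos_of_nonneg_of_le_pi
          · positivity
          · have : π / (2 * L) ≤ π / 2 := by
              rw [div_le_div_iff₀ (by positivity) (by norm_num)]
              nlinarith
            linarith
          · rw [div_le_div_iff₀ hL0 (by positivity)]
            have := hx.2
            nlinarith
        have h3 : (1 / ε) * Real.cos x < (1 / ε) * (ε * c) := by
          apply mul_lt_mul_of_pos_left h1 (by positivity)
        have h4 : (1 / ε) * (ε * c) = c := by field_simp
        show (1 / ε) * Real.cos x < Real.cos (x / L)
        rw [h4] at h3
        linarith
      have hEq : f =ᶠ[nhds x] (fun y => (1 / ε) * Real.cos y) := by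
        filter_upwards [hS.mem_nhds hxS] with y hy
        exact min_eq_right (le_of_lt hy)
      rw [hEq.deriv_eq]
      exact ((Real.hasDerivAt_cos x).const_mul (1 / ε)).deriv
    -- Lipschitz bound on deriv f
    have hKpos : (0:ℝ) ≤ 1 / ε := by positivity
    have h_lip : LipschitzWith ⟨1 / ε, hKpos⟩ f := by
      have h1 : LipschitzWith ⟨1 / ε, hKpos⟩ (fun y : ℝ => Real.cos (y / L)) := by
        apply lipschitzWith_of_nnnorm_deriv_le
        · exact fun x => (Real.differentiable_cos.differentiableAt).comp x
            ((differentiable_id.div_const L) x)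
        · intro x
          have hd : deriv (fun y : ℝ => Real.cos (y / L)) x
              = -Real.sin (x / L) * (1 / L) := by
            have := (Real.hasDerivAt_cos (x / L)).comp x
              ((hasDerivAt_id x).div_const L)
            simpa using this.deriv
          refine NNReal.coe_le_coe.1 ?_
          rw [coe_nnnorm]
          change _ ≤ 1 / ε
          push_cast
          rw [hd]
          have h1L : 1 / L ≤ 1 := by
            rw [div_le_one hL0]; linarith
          have h1ε : (1:ℝ) ≤ 1 / ε := by
            rw [le_div_iff₀ hε0]; linarith
          rw [Real.norm_eq_abs, abs_mul, abs_neg]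
          have habs : |Real.sin (x / L)| ≤ 1 := Real.abs_sin_le_one _
          have : |1 / L| = 1 / L := abs_of_pos (by positivity)
          rw [this]
          nlinarith [abs_nonneg (Real.sin (x / L))]
      have h2 : LipschitzWith ⟨1 / ε, hKpos⟩ (fun y : ℝ => (1 / ε) * Real.cos y) := by
        apply lipschitzWith_of_nnnorm_deriv_le
        · exact fun x => (Real.differentiable_cos x).const_mul _
        · intro x
          have hd : deriv (fun y : ℝ => (1 / ε) * Real.cos y) x
              = (1 / ε) * (-Real.sin x) := ((Real.hasDerivAt_cos x).const_mul (1 / ε)).deriv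
          refine NNReal.coe_le_coe.1 ?_
          rw [coe_nnnorm]
          change _ ≤ 1 / ε
          push_cast
          rw [hd, Real.norm_eq_abs, abs_mul, abs_neg]
          have habs : |Real.sin x| ≤ 1 := Real.abs_sin_le_one _
          have : |1 / ε| = 1 / ε := abs_of_pos (by positivity)
          rw [this]
          nlinarith [abs_nonneg (Real.sin x), hKpos]
      have := h1.min h2
      exact this.weaken (max_le le_rfl le_rfl)
    have h_bound : ∀ x, |deriv f x| ≤ 1 / ε := by
      intro x
      have := norm_deriv_le_of_lipschitz (𝕜 := ℝ) (f := f) (x₀ := x) h_lip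
      exact this
    -- integrability of (deriv f)^2 on the big interval
    have h_meas : Measurable (fun x => (deriv f x) ^ 2) := (measurable_deriv f).pow_const 2
    have h_int : IntervalIntegrable (fun x => (deriv f x) ^ 2) MeasureTheory.volume
        (-(π / 2)) (π / 2) := by
      rw [intervalIntegrable_iff]
      refine MeasureTheory.Measure.integrableOn_of_bounded (M := (1 / ε) ^ 2)
        (ne_of_lt measure_Ioc_lt_top) h_meas.aestronglyMeasurable ?_
      apply Filter.Eventually.of_forall
      intro x
      have hb := h_bound x
      rw [Real.norm_eq_abs, abs_of_nonneg (sq_nonneg _)]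
      calc (deriv f x) ^ 2 = |deriv f x| ^ 2 := (sq_abs _).symm
        _ ≤ (1 / ε) ^ 2 := by nlinarith [abs_nonneg (deriv f x)]
    -- chain of inequalities
    have step1 : (∫ x in a..(π / 2), (deriv f x) ^ 2)
        ≤ ∫ x in (-(π / 2))..(π / 2), (deriv f x) ^ 2 := by
      apply intervalIntegral.integral_mono_interval (by linarith) (le_of_lt haπ2) le_rfl
      · exact Filter.Eventually.of_forall (fun x => sq_nonneg _)
      · exact h_int
    have step2 : (∫ x in a..(π / 2), (deriv f x) ^ 2)
        = ∫ x in a..(π / 2), ((1 / ε) * (-Real.sin x)) ^ 2 := by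
      apply intervalIntegral.integral_congr_ae
      apply Filter.Eventually.of_forall
      intro x hx
      rw [Set.uIoc_of_le (le_of_lt haπ2)] at hx
      rw [h_deriv x hx]
    have step3 : ((π / 2 - a) * ((1 - (ε * c) ^ 2) / ε ^ 2))
        ≤ ∫ x in a..(π / 2), ((1 / ε) * (-Real.sin x)) ^ 2 := by
      have := intervalIntegral.integral_mono_on (μ := MeasureTheory.volume)
        (f := fun _ => (1 - (ε * c) ^ 2) / ε ^ 2)
        (g := fun x => ((1 / ε) * (-Real.sin x)) ^ 2)
        (a := a) (b := π / 2) (le_of_lt haπ2)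
        intervalIntegrable_const
        (Continuous.intervalIntegrable (by continuity) _ _)
        ?_
      · calc (π / 2 - a) * ((1 - (ε * c) ^ 2) / ε ^ 2)
            = ∫ _ in a..(π / 2), (1 - (ε * c) ^ 2) / ε ^ 2 := by
              rw [intervalIntegral.integral_const, smul_eq_mul]
          _ ≤ _ := this
      · intro x hx
        have hx0 : 0 ≤ x := le_trans (le_of_lt ha0) hx.1
        have hcosx0 : 0 ≤ Real.cos x :=
          Real.cos_nonneg_of_mem_Icc ⟨by linarith [hx.2], hx.2⟩
        have hcosxa : Real.cos x ≤ ε * c := by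
          rw [← hcos_a]
          exact Real.cos_le_cos_of_nonneg_of_le_pi (le_of_lt ha0)
            (by linarith [hx.2]) hx.1
        have hsin : Real.sin x ^ 2 = 1 - Real.cos x ^ 2 := by
          nlinarith [Real.sin_sq_add_cos_sq x]
        have hcsq : Real.cos x ^ 2 ≤ (ε * c) ^ 2 := by nlinarith
        have hε2 : (0:ℝ) < ε ^ 2 := by positivity
        show (1 - (ε * c) ^ 2) / ε ^ 2 ≤ ((1 / ε) * (-Real.sin x)) ^ 2
        rw [div_le_iff₀ hε2]
        have hexp : ((1 / ε) * (-Real.sin x)) ^ 2 * ε ^ 2 = Real.sin x ^ 2 := by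
          field_simp
        rw [hexp]
        nlinarith
    have step4 : ε * c ≤ π / 2 - a := by
      have harcsin : a = π / 2 - Real.arcsin (ε * c) :=
        Real.arccos_eq_pi_div_two_sub_arcsin _
      have h1 : ε * c ≤ Real.arcsin (ε * c) := by
        have h2 : Real.sin (Real.arcsin (ε * c)) = ε * c :=
          Real.sin_arcsin (by linarith) (le_of_lt hεc1)
        have h3 : 0 ≤ Real.arcsin (ε * c) := Real.arcsin_nonneg.2 (le_of_lt hεc0)
        have h4 := Real.sin_le h3
        linarith [h4, h2.symm ▸ h4]
      rw [harcsin]; linarith [h1]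
    -- combine
    have hlow : c / (2 * ε) ≤ (π / 2 - a) * ((1 - (ε * c) ^ 2) / ε ^ 2) := by
      have h1 : (1:ℝ) / 2 ≤ 1 - (ε * c) ^ 2 := by nlinarith
      have h2 : (ε * c) * ((1 / 2) / ε ^ 2) ≤ (π / 2 - a) * ((1 - (ε * c) ^ 2) / ε ^ 2) := by
        apply mul_le_mul step4 ?_ (by positivity) (by linarith)
        gcongr
      have h3 : c / (2 * ε) = (ε * c) * ((1 / 2) / ε ^ 2) := by
        field_simp
      rw [h3]
      exact h2
    calc c / (2 * ε) ≤ (π / 2 - a) * ((1 - (ε * c) ^ 2) / ε ^ 2) := hlow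
      _ ≤ ∫ x in a..(π / 2), ((1 / ε) * (-Real.sin x)) ^ 2 := step3
      _ = ∫ x in a..(π / 2), (deriv f x) ^ 2 := step2.symm
      _ ≤ _ := step1
  -- conclude
  have htend : Filter.Tendsto (fun ε : ℝ => c / (2 * ε)) (nhdsWithin 0 (Set.Ioi 0))
      Filter.atTop := by
    have h1 : Filter.Tendsto (fun ε : ℝ => ε⁻¹) (nhdsWithin 0 (Set.Ioi 0)) Filter.atTop :=
      tendsto_inv_nhdsGT_zero
    have h2 := h1.const_mul_atTop (by positivity : (0:ℝ) < c / 2)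
    apply h2.congr
    intro x
    field_simp
  apply Filter.tendsto_atTop_mono' _ _ htend
  filter_upwards [Ioo_mem_nhdsGT_of_mem (by constructor <;> [exact le_rfl; exact hε₀pos] :
    (0:ℝ) ∈ Ico 0 ε₀)] with ε hε
  exact key ε hε
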